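/- For any numbers 0 < ε < 1 and 0 < γ ≤ π/12 there exists a bounded measurable function φ : ℝ² → ℝ such that: (1) supp φ ⊆ B(ε), ∫_{ℝ²} φ = 0, and ∫_{ℝ²} |φ| ≤ 1; (2) ∫_{rot_s([0,x₁]×[0,x₂])} φ ≥ 1/4 whenever x₁, x₂ ≥ ε and |s| ≤ γ; and (3) M_s φ(x) < ε whenever x ∉ Γ_s(2ε) ∪ Γ_{s+π/2}(2ε) and 3γ < |s| < π/2 − 3γ. -/

import Mathlib

open MeasureTheory Filter Set Real
open scoped ENNReal

noncomputable section

/-- Rotation of the plane about the origin by angle `s`. -/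
def rot (s : ℝ) (p : ℝ × ℝ) : ℝ × ℝ :=
  (p.1 * Real.cos s - p.2 * Real.sin s, p.1 * Real.sin s + p.2 * Real.cos s)

/-- The open rectangle with slope `s`, corner `c` and side lengths `a`, `b`. -/
def rect (s : ℝ) (c : ℝ × ℝ) (a b : ℝ) : Set (ℝ × ℝ) :=
  (fun p => c + rot s p) '' (Set.Ioo 0 a ×ˢ Set.Ioo 0 b)

/-- `R` is an open rectangle with slope `s` whose side lengths satisfy `P`. -/
def IsRectWith (s : ℝ) (P : ℝ → Prop) (R : Set (ℝ × ℝ)) : Prop :=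
  ∃ c a b, 0 < a ∧ 0 < b ∧ P a ∧ P b ∧ R = rect s c a b

/-- `R` is an open rectangle with slope `s`. -/
def IsRect (s : ℝ) (R : Set (ℝ × ℝ)) : Prop :=
  IsRectWith s (fun _ => True) R

/-- Average of `f` over the set `R`. -/
def avg (f : ℝ × ℝ → ℝ) (R : Set (ℝ × ℝ)) : ℝ :=
  (∫ p in R, f p) / (volume R).toReal

/-- The filter of slope-`s` rectangles containing `x` with diameters shrinking to `0`. -/
def rectFilter (s : ℝ) (x : ℝ × ℝ) : Filter (Set (ℝ × ℝ)) :=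
  ⨅ d ∈ Set.Ioi (0 : ℝ), Filter.principal {R | IsRect s R ∧ x ∈ R ∧ Metric.diam R < d}

/-- The upper derivative `D̄_s f (x)`. -/
def upperDeriv (s : ℝ) (f : ℝ × ℝ → ℝ) (x : ℝ × ℝ) : EReal :=
  Filter.limsup (fun R => (avg f R : EReal)) (rectFilter s x)

/-- The basis `R_s` differentiates the integral of `f`. -/
def Differentiates (s : ℝ) (f : ℝ × ℝ → ℝ) : Prop :=
  ∀ᵐ x : ℝ × ℝ, Filter.Tendsto (fun R => avg f R) (rectFilter s x) (nhds (f x))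

/-- `S ⊆ [0, π/2)` is a `G_δ` set in `[0, π/2)`. -/
def IsGdeltaIn (S : Set ℝ) : Prop :=
  ∃ G : ℕ → Set ℝ, (∀ k, IsOpen (G k)) ∧ S = (⋂ k, G k) ∩ Set.Ico 0 (π / 2)

/-- `S` is a `G_δσ` set in `[0, π/2)`. -/
def IsGdeltaSigmaIn (S : Set ℝ) : Prop :=
  ∃ F : ℕ → Set ℝ, (∀ n, IsGdeltaIn (F n)) ∧ S = ⋃ n, F n

/-- `S` is an `R`-set. -/
def IsRSet (S : Set ℝ) : Prop :=
  S ⊆ Set.Ico 0 (π / 2) ∧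
    ∃ f : ℝ × ℝ → ℝ, Integrable f ∧
      (∀ s ∈ Set.Ico 0 (π / 2) \ S, Differentiates s f) ∧
      (∀ s ∈ S, ∀ᵐ x : ℝ × ℝ, upperDeriv s f x = ⊤)

/-- `S` is a `WR`-set. -/
def IsWRSet (S : Set ℝ) : Prop :=
  S ⊆ Set.Ico 0 (π / 2) ∧
    ∃ f : ℝ × ℝ → ℝ, Integrable f ∧
      (∀ s ∈ Set.Ico 0 (π / 2) \ S, Differentiates s f) ∧
      (∀ s ∈ S, 0 < volume {x : ℝ × ℝ | upperDeriv s f x = ⊤})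

/-- The grid square `Q_k^n` of side `1/n`. -/
def gridSq (n : ℕ) (k : ℤ × ℤ) : Set (ℝ × ℝ) :=
  (fun x : ℝ × ℝ => ((n : ℝ))⁻¹ • (((k.1 : ℝ), (k.2 : ℝ)) + x)) ''
    (Set.Ico (-(1 : ℝ)/2) (1/2) ×ˢ Set.Ico (-(1 : ℝ)/2) (1/2))

/-- `mes_* A = inf_k |A ∩ Q_k|`. -/
def mesLow (A : Set (ℝ × ℝ)) : ℝ :=
  ⨅ k : ℤ × ℤ, (volume (A ∩ gridSq 1 k)).toReal

/-- `mes^* A = sup_k |A ∩ Q_k|`. -/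
def mesUp (A : Set (ℝ × ℝ)) : ℝ :=
  ⨆ k : ℤ × ℤ, (volume (A ∩ gridSq 1 k)).toReal

/-- `dil_n A = {x : n x ∈ A}`. -/
def dil (n : ℕ) (A : Set (ℝ × ℝ)) : Set (ℝ × ℝ) :=
  {x : ℝ × ℝ | (n : ℝ) • x ∈ A}

/-- `A` is a `δ`-set with respect to the slope `s`: a union of mutually disjoint
rectangles of slope `s` with both side lengths `≥ δ`. -/
def IsDeltaSet (s δ : ℝ) (A : Set (ℝ × ℝ)) : Prop :=
  ∃ (ι : Type) (R : ι → Set (ℝ × ℝ)),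
    (∀ i, IsRectWith s (fun a => δ ≤ a) (R i)) ∧
      Pairwise (Function.onFun Disjoint R) ∧ A = ⋃ i, R i

/-- The maximal function over slope-`s` rectangles whose side lengths satisfy `P`. -/
def maxFn (s : ℝ) (P : ℝ → Prop) (f : ℝ × ℝ → ℝ) (x : ℝ × ℝ) : ℝ≥0∞ :=
  ⨆ (R : Set (ℝ × ℝ)) (_ : IsRectWith s P R ∧ x ∈ R),
    ENNReal.ofReal (|∫ p in R, f p| / (volume R).toReal)

/-- The points `θ_k`, `k = ±1, ±2, …`. -/
def theta (ε γ : ℝ) (k : ℤ) : ℝ × ℝ :=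
  (ε / 2 ^ k.natAbs, (k.sign : ℝ) * Real.tan γ * ε / 2 ^ k.natAbs)

/-- The strip `Γ_s(ε)`. -/
def strip (s ε : ℝ) : Set (ℝ × ℝ) :=
  rot s '' {x : ℝ × ℝ | |x.2| < ε}

/-- The Euclidean ball `B(ε)` in the plane. -/
def euclBall (ε : ℝ) : Set (ℝ × ℝ) :=
  {x : ℝ × ℝ | Real.sqrt (x.1 ^ 2 + x.2 ^ 2) ≤ ε}

namespace Stmt10

open scoped Pointwise

/-! ### Rotation basics -/

lemma rot_rot (s u : ℝ) (p : ℝ × ℝ) : rot s (rot u p) = rot (s + u) p := by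
  simp only [rot, Real.cos_add, Real.sin_add, Prod.mk.injEq]
  constructor <;> ring

lemma rot_zero (p : ℝ × ℝ) : rot 0 p = p := by
  simp [rot]

lemma mem_rot_image {s : ℝ} {A : Set (ℝ × ℝ)} {p : ℝ × ℝ} :
    p ∈ rot s '' A ↔ rot (-s) p ∈ A := by
  constructor
  · rintro ⟨y, hy, rfl⟩
    rwa [rot_rot, neg_add_cancel, rot_zero]
  · intro h
    exact ⟨rot (-s) p, h, by rw [rot_rot, add_neg_cancel, rot_zero]⟩

lemma rot_neg_apply (s : ℝ) (p : ℝ × ℝ) :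
    rot (-s) p = (p.1 * Real.cos s + p.2 * Real.sin s,
      -(p.1 * Real.sin s) + p.2 * Real.cos s) := by
  simp only [rot, Real.cos_neg, Real.sin_neg, Prod.mk.injEq]
  constructor <;> ring

lemma mem_strip {s e : ℝ} {x : ℝ × ℝ} :
    x ∈ strip s e ↔ |(-(x.1 * Real.sin s) + x.2 * Real.cos s)| < e := by
  rw [strip, mem_rot_image, rot_neg_apply]
  rfl

/-- The linear rotation map. -/
def rotL (s : ℝ) : (ℝ × ℝ) →ₗ[ℝ] (ℝ × ℝ) where
  toFun := rot s
  map_add' p q := by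
    simp only [rot, Prod.fst_add, Prod.snd_add, Prod.mk_add_mk, Prod.mk.injEq]
    constructor <;> ring
  map_smul' r p := by
    simp only [rot, Prod.smul_fst, Prod.smul_snd, Prod.smul_mk, smul_eq_mul,
      RingHom.id_apply, Prod.mk.injEq]
    constructor <;> ring

lemma det_rotL (s : ℝ) : LinearMap.det (rotL s) = 1 := by
  rw [← LinearMap.det_toMatrix (Module.Basis.finTwoProd ℝ)]
  have h : (LinearMap.toMatrix (Module.Basis.finTwoProd ℝ) (Module.Basis.finTwoProd ℝ)) (rotL s)
      = !![Real.cos s, -Real.sin s; Real.sin s, Real.cos s] := by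
    ext i j
    fin_cases i <;> fin_cases j <;>
      simp [LinearMap.toMatrix_apply, rotL, rot, Module.Basis.finTwoProd]
  rw [h, Matrix.det_fin_two_of]
  nlinarith [Real.sin_sq_add_cos_sq s]

lemma vol_box (x1 x2 y1 y2 : ℝ) :
    volume (Set.Ioo x1 x2 ×ˢ Set.Ioo y1 y2) =
      ENNReal.ofReal (x2 - x1) * ENNReal.ofReal (y2 - y1) := by
  rw [show (volume : Measure (ℝ × ℝ)) = (volume : Measure ℝ).prod volume from
    Measure.volume_eq_prod ℝ ℝ, Measure.prod_prod, Real.volume_Ioo, Real.volume_Ioo]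

lemma volume_rect (s : ℝ) (c : ℝ × ℝ) (a b : ℝ) :
    volume (rect s c a b) = ENNReal.ofReal a * ENNReal.ofReal b := by
  have h1 : rect s c a b = c +ᵥ (⇑(rotL s) '' (Set.Ioo 0 a ×ˢ Set.Ioo 0 b)) := by
    rw [← Set.image_vadd, ← Set.image_comp]
    rfl
  rw [h1, measure_vadd, Measure.addHaar_image_linearMap, det_rotL]
  simp [vol_box]

lemma mem_rect {s : ℝ} {c p : ℝ × ℝ} {a b : ℝ} :
    p ∈ rect s c a b ↔
      (0 < (p.1 - c.1) * Real.cos s + (p.2 - c.2) * Real.sin s ∧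
        (p.1 - c.1) * Real.cos s + (p.2 - c.2) * Real.sin s < a) ∧
      (0 < -((p.1 - c.1) * Real.sin s) + (p.2 - c.2) * Real.cos s ∧
        -((p.1 - c.1) * Real.sin s) + (p.2 - c.2) * Real.cos s < b) := by
  have pyth := Real.sin_sq_add_cos_sq s
  constructor
  · rintro ⟨y, ⟨⟨hy1, hy2⟩, hy3, hy4⟩, rfl⟩
    have e1 : ((c + rot s y).1 - c.1) * Real.cos s + ((c + rot s y).2 - c.2) * Real.sin s
        = y.1 := by
      simp only [rot, Prod.fst_add, Prod.snd_add]
      ring_nf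
      linear_combination y.1 * pyth
    have e2 : -(((c + rot s y).1 - c.1) * Real.sin s) + ((c + rot s y).2 - c.2) * Real.cos s
        = y.2 := by
      simp only [rot, Prod.fst_add, Prod.snd_add]
      ring_nf
      linear_combination y.2 * pyth
    rw [e1, e2]
    exact ⟨⟨hy1, hy2⟩, hy3, hy4⟩
  · rintro ⟨⟨h1, h2⟩, h3, h4⟩
    refine ⟨((p.1 - c.1) * Real.cos s + (p.2 - c.2) * Real.sin s,
      -((p.1 - c.1) * Real.sin s) + (p.2 - c.2) * Real.cos s), ⟨⟨h1, h2⟩, h3, h4⟩, ?_⟩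
    rw [Prod.ext_iff]
    constructor
    · simp only [rot, Prod.fst_add]
      linear_combination (p.1 - c.1) * pyth
    · simp only [rot, Prod.snd_add]
      linear_combination (p.2 - c.2) * pyth

end Stmt10

namespace Stmt10

/-! ### The construction -/

/-- dyadic scales -/
def ak (ε : ℝ) (k : ℕ) : ℝ := ε / 2 ^ (k + 2)

/-- blob radius -/
def rr (ε γ : ℝ) (k : ℕ) : ℝ := Real.tan γ * ak ε k / 100

/-- positive blob -/
def Sp (ε γ : ℝ) (k : ℕ) : Set (ℝ × ℝ) :=
  Set.Ioo (ak ε k - rr ε γ k) (ak ε k + rr ε γ k) ×ˢ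
    Set.Ioo (21 / 20 * Real.tan γ * ak ε k - rr ε γ k)
      (21 / 20 * Real.tan γ * ak ε k + rr ε γ k)

/-- negative blob -/
def Sm (ε γ : ℝ) (k : ℕ) : Set (ℝ × ℝ) :=
  Set.Ioo (ak ε k - rr ε γ k) (ak ε k + rr ε γ k) ×ˢ
    Set.Ioo (-(21 / 20 * Real.tan γ * ak ε k) - rr ε γ k)
      (-(21 / 20 * Real.tan γ * ak ε k) + rr ε γ k)

/-- the function φ -/
def ph (ε γ : ℝ) (N : ℕ) : ℝ × ℝ → ℝ := fun x =>
  ∑ k ∈ Finset.range N, (1 / (2 * (N : ℝ)) / (4 * rr ε γ k ^ 2)) *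
    ((Sp ε γ k).indicator (fun _ => (1 : ℝ)) x - (Sm ε γ k).indicator (fun _ => (1 : ℝ)) x)

lemma ak_pos {ε : ℝ} (hε : 0 < ε) (k : ℕ) : 0 < ak ε k :=
  div_pos hε (by positivity)

lemma ak_le {ε : ℝ} (hε : 0 < ε) (k : ℕ) : ak ε k ≤ ε / 4 := by
  rw [ak]
  apply div_le_div_of_nonneg_left hε.le (by norm_num)
  calc (4 : ℝ) = 2 ^ 2 := by norm_num
  _ ≤ 2 ^ (k + 2) := by
      apply pow_le_pow_right₀ (by norm_num)
      omega

lemma rr_pos {ε γ : ℝ} (hε : 0 < ε) (ht : 0 < Real.tan γ) (k : ℕ) : 0 < rr ε γ k := by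
  have := ak_pos hε k
  rw [rr]; positivity

lemma measurableSet_Sp {ε γ : ℝ} (k : ℕ) : MeasurableSet (Sp ε γ k) :=
  measurableSet_Ioo.prod measurableSet_Ioo

lemma measurableSet_Sm {ε γ : ℝ} (k : ℕ) : MeasurableSet (Sm ε γ k) :=
  measurableSet_Ioo.prod measurableSet_Ioo

lemma vol_Sp {ε γ : ℝ} (k : ℕ) :
    volume (Sp ε γ k) = ENNReal.ofReal (2 * rr ε γ k) * ENNReal.ofReal (2 * rr ε γ k) := by
  rw [Sp, vol_box]
  ring_nf

lemma vol_Sm {ε γ : ℝ} (k : ℕ) :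
    volume (Sm ε γ k) = ENNReal.ofReal (2 * rr ε γ k) * ENNReal.ofReal (2 * rr ε γ k) := by
  rw [Sm, vol_box]
  ring_nf

lemma vol_Sp_toReal {ε γ : ℝ} (hr : 0 ≤ rr ε γ k) :
    (volume (Sp ε γ k)).toReal = 4 * rr ε γ k ^ 2 := by
  rw [vol_Sp, ENNReal.toReal_mul, ENNReal.toReal_ofReal (by linarith)]
  ring

lemma vol_Sm_toReal {ε γ : ℝ} (hr : 0 ≤ rr ε γ k) :
    (volume (Sm ε γ k)).toReal = 4 * rr ε γ k ^ 2 := by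
  rw [vol_Sm, ENNReal.toReal_mul, ENNReal.toReal_ofReal (by linarith)]
  ring

lemma vol_Sp_lt_top {ε γ : ℝ} (k : ℕ) : volume (Sp ε γ k) < ⊤ := by
  rw [vol_Sp]; exact ENNReal.mul_lt_top ENNReal.ofReal_lt_top ENNReal.ofReal_lt_top

lemma vol_Sm_lt_top {ε γ : ℝ} (k : ℕ) : volume (Sm ε γ k) < ⊤ := by
  rw [vol_Sm]; exact ENNReal.mul_lt_top ENNReal.ofReal_lt_top ENNReal.ofReal_lt_top

lemma integrable_ind {S : Set (ℝ × ℝ)} (hS : MeasurableSet S) (hfin : volume S < ⊤) :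
    Integrable (S.indicator (fun _ => (1 : ℝ))) volume :=
  (integrable_indicator_iff hS).2 (integrableOn_const hfin.ne (by simp))

lemma integrable_ph_term {ε γ : ℝ} (N k : ℕ) (A : Set (ℝ × ℝ)) :
    Integrable (fun x => (1 / (2 * (N : ℝ)) / (4 * rr ε γ k ^ 2)) *
      ((Sp ε γ k).indicator (fun _ => (1 : ℝ)) x - (Sm ε γ k).indicator (fun _ => (1 : ℝ)) x))
      (volume.restrict A) := by
  apply Integrable.const_mul
  exact ((integrable_ind (measurableSet_Sp k) (vol_Sp_lt_top k)).restrict.sub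
    (integrable_ind (measurableSet_Sm k) (vol_Sm_lt_top k)).restrict)

lemma integrable_ph {ε γ : ℝ} (N : ℕ) (A : Set (ℝ × ℝ)) :
    Integrable (ph ε γ N) (volume.restrict A) := by
  unfold ph
  apply MeasureTheory.integrable_finset_sum
  intro k _
  exact integrable_ph_term N k A

lemma setIntegral_ph (ε γ : ℝ) (N : ℕ) (A : Set (ℝ × ℝ)) :
    ∫ x in A, ph ε γ N x =
      ∑ k ∈ Finset.range N, (1 / (2 * (N : ℝ)) / (4 * rr ε γ k ^ 2)) *
        ((volume (A ∩ Sp ε γ k)).toReal - (volume (A ∩ Sm ε γ k)).toReal) := by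
  unfold ph
  rw [integral_finset_sum _ (fun k _ => integrable_ph_term N k A)]
  refine Finset.sum_congr rfl fun k _ => ?_
  rw [integral_const_mul]
  congr 1
  rw [integral_sub (integrable_ind (measurableSet_Sp k) (vol_Sp_lt_top k)).restrict
    (integrable_ind (measurableSet_Sm k) (vol_Sm_lt_top k)).restrict]
  rw [setIntegral_indicator (measurableSet_Sp k), setIntegral_indicator (measurableSet_Sm k),
    setIntegral_const, setIntegral_const]
  simp [measureReal_def]

/-! ### Counting lemma -/

lemma ak_quarter {ε : ℝ} (hε : 0 < ε) {k1 k2 : ℕ} (h : k1 + 2 ≤ k2) :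
    4 * ak ε k2 ≤ ak ε k1 := by
  have h2 : (2 : ℝ) ^ (k1 + 2) * 4 ≤ 2 ^ (k2 + 2) := by
    calc (2 : ℝ) ^ (k1 + 2) * 4 = 2 ^ (k1 + 2 + 2) := by rw [pow_add (2:ℝ) (k1+2) 2]; norm_num
    _ ≤ 2 ^ (k2 + 2) := pow_le_pow_right₀ one_le_two (by omega)
  rw [ak, ak, mul_comm, div_mul_eq_mul_div, div_le_div_iff₀ (by positivity) (by positivity)]
  nlinarith [mul_le_mul_of_nonneg_left h2 hε.le]

lemma card_filter_edge_le (ε t β d : ℝ) (hε : 0 < ε) (ht : 0 < t)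
    (hβ : 21 / 10 * t ≤ |β|) (N : ℕ) :
    ((Finset.range N).filter fun k =>
      |ak ε k * β - d| ≤ 107 / 100 * t * ak ε k).card ≤ 2 := by
  classical
  set F := (Finset.range N).filter fun k =>
      |ak ε k * β - d| ≤ 107 / 100 * t * ak ε k with hF
  have key : ∀ k1 ∈ F, ∀ k2 ∈ F, k1 + 2 ≤ k2 → False := by
    intro k1 h1 k2 h2 hle
    have e1 := (Finset.mem_filter.1 h1).2
    have e2 := (Finset.mem_filter.1 h2).2
    rw [abs_le] at e1 e2
    have hq := ak_quarter hε hle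
    have hp1 := ak_pos hε k1
    have hp2 := ak_pos hε k2
    rcases le_abs.1 hβ with hb | hb
    · nlinarith [mul_le_mul_of_nonneg_right hq (by linarith : (0:ℝ) ≤ β + 107/100 * t),
        mul_pos hp1 ht]
    · nlinarith [mul_le_mul_of_nonneg_right hq (by linarith : (0:ℝ) ≤ -β + 107/100 * t),
        mul_pos hp1 ht]
  rcases F.eq_empty_or_nonempty with h | h
  · simp [h]
  · have hsub : F ⊆ Finset.Icc (F.min' h) (F.min' h + 1) := by
      intro k hk
      rw [Finset.mem_Icc]
      refine ⟨F.min'_le k hk, ?_⟩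
      by_contra hc
      exact key (F.min' h) (F.min'_mem h) k hk (by omega)
    calc F.card ≤ (Finset.Icc (F.min' h) (F.min' h + 1)).card := Finset.card_le_card hsub
    _ = 2 := by rw [Nat.card_Icc]; omega

/-- the set of scales interacting with an edge line -/
def edgeSet (ε γ β d : ℝ) (N : ℕ) : Finset ℕ :=
  (Finset.range N).filter fun k => |ak ε k * β - d| ≤ 107 / 100 * Real.tan γ * ak ε k

lemma card_edgeSet_le {ε γ : ℝ} (β d : ℝ) (hε : 0 < ε) (ht : 0 < Real.tan γ)
    (hβ : 21 / 10 * Real.tan γ ≤ |β|) (N : ℕ) : (edgeSet ε γ β d N).card ≤ 2 :=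
  card_filter_edge_le ε (Real.tan γ) β d hε ht hβ N

end Stmt10

namespace Stmt10

/-! ### Trigonometric estimates -/

lemma abs_sin_eq {s : ℝ} (h : |s| ≤ π) : |Real.sin s| = Real.sin |s| := by
  have e : |Real.sin s| = abs (Real.sin (abs s)) := by
    rcases le_or_gt 0 s with h' | h'
    · rw [abs_of_nonneg h']
    · rw [abs_of_neg h', Real.sin_neg, abs_neg]
  rw [e, abs_of_nonneg (Real.sin_nonneg_of_nonneg_of_le_pi (abs_nonneg s) h)]

lemma gamma_le {γ : ℝ} (h12 : γ ≤ π / 12) : γ ≤ 0.2625 := by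
  have := Real.pi_lt_d2
  linarith

lemma cos_gamma_ge {γ : ℝ} (h0 : 0 < γ) (h12 : γ ≤ π / 12) : 24 / 25 ≤ Real.cos γ := by
  have h1 : γ ≤ 0.2625 := gamma_le h12
  have h2 := Real.one_sub_sq_div_two_le_cos (x := γ)
  nlinarith

lemma sin_gamma_pos {γ : ℝ} (h0 : 0 < γ) (h12 : γ ≤ π / 12) : 0 < Real.sin γ := by
  apply Real.sin_pos_of_pos_of_lt_pi h0
  have := Real.pi_gt_d6
  nlinarith

lemma sin_gamma_le {γ : ℝ} (h0 : 0 < γ) (h12 : γ ≤ π / 12) : Real.sin γ ≤ 0.2625 :=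
  le_trans (Real.sin_le h0.le) (gamma_le h12)

lemma tan_gamma_pos {γ : ℝ} (h0 : 0 < γ) (h12 : γ ≤ π / 12) : 0 < Real.tan γ := by
  rw [Real.tan_eq_sin_div_cos]
  exact div_pos (sin_gamma_pos h0 h12) (by linarith [cos_gamma_ge h0 h12])

lemma tan_gamma_le {γ : ℝ} (h0 : 0 < γ) (h12 : γ ≤ π / 12) : Real.tan γ ≤ 7 / 25 := by
  rw [Real.tan_eq_sin_div_cos, div_le_iff₀ (by linarith [cos_gamma_ge h0 h12])]
  have h1 := sin_gamma_le h0 h12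
  have h2 := cos_gamma_ge h0 h12
  nlinarith

lemma sin_tan_eq {γ : ℝ} (h0 : 0 < γ) (h12 : γ ≤ π / 12) :
    Real.sin γ = Real.tan γ * Real.cos γ := by
  rw [Real.tan_eq_sin_div_cos]
  field_simp [show Real.cos γ ≠ 0 by linarith [cos_gamma_ge h0 h12]]

lemma sin_three_ge {γ : ℝ} (h0 : 0 < γ) (h12 : γ ≤ π / 12) :
    21 / 10 * Real.tan γ ≤ Real.sin (3 * γ) := by
  have hc := cos_gamma_ge h0 h12
  have hc1 := Real.cos_le_one γ
  have hs := sin_gamma_pos h0 h12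
  have pyth := Real.sin_sq_add_cos_sq γ
  have h3 := Real.sin_three_mul γ
  have ht := sin_tan_eq h0 h12
  have hcpos : (0 : ℝ) < Real.cos γ := by linarith
  have htan : Real.tan γ = Real.sin γ / Real.cos γ := Real.tan_eq_sin_div_cos γ
  rw [htan, h3, mul_div_assoc', div_le_iff₀ hcpos]
  nlinarith [sq_nonneg (Real.cos γ - 24 / 25), sq_nonneg (Real.cos γ - 1),
    mul_pos hs hcpos, sq_nonneg (Real.sin γ)]

lemma abs_cos_sin_ge {γ s : ℝ} (h0 : 0 < γ) (h12 : γ ≤ π / 12)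
    (h1 : 3 * γ < |s|) (h2 : |s| < π / 2 - 3 * γ) :
    21 / 10 * Real.tan γ ≤ |Real.sin s| ∧ 21 / 10 * Real.tan γ ≤ |Real.cos s| := by
  have hpi := Real.pi_gt_d6
  have hpi2 := Real.pi_lt_d2
  have h3g : 3 * γ ≤ π / 4 := by linarith
  have hs2 : |s| < π / 2 := by linarith
  have hmem1 : 3 * γ ∈ Set.Icc (-(π / 2)) (π / 2) := by
    constructor <;> nlinarith
  have hmem2 : |s| ∈ Set.Icc (-(π / 2)) (π / 2) := by
    constructor
    · nlinarith [abs_nonneg s]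
    · linarith
  have hsin : Real.sin (3 * γ) ≤ Real.sin |s| :=
    (Real.strictMonoOn_sin hmem1 hmem2 (by linarith)).le
  have habs : |Real.sin s| = Real.sin |s| := abs_sin_eq (by nlinarith [abs_nonneg s])
  have hS3 := sin_three_ge h0 h12
  constructor
  · rw [habs]; linarith
  · have hc1 : Real.cos s = Real.cos |s| := (Real.cos_abs s).symm
    have hc2 : Real.cos (π / 2 - 3 * γ) ≤ Real.cos |s| :=
      Real.cos_le_cos_of_nonneg_of_le_pi (abs_nonneg s) (by nlinarith) h2.le
    rw [Real.cos_pi_div_two_sub] at hc2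
    have : 21 / 10 * Real.tan γ ≤ Real.cos s := by rw [hc1]; linarith
    have hpos : 0 < Real.cos s := by
      have := tan_gamma_pos h0 h12; linarith
    rw [abs_of_pos hpos]
    exact this

lemma cos_s_ge {γ s : ℝ} (h0 : 0 < γ) (h12 : γ ≤ π / 12) (hs : |s| ≤ γ) :
    Real.cos γ ≤ Real.cos s := by
  rw [← Real.cos_abs s]
  apply Real.cos_le_cos_of_nonneg_of_le_pi (abs_nonneg s) ?_ hs
  have := Real.pi_gt_d6
  linarith

lemma abs_sin_s_le {γ s : ℝ} (h0 : 0 < γ) (h12 : γ ≤ π / 12) (hs : |s| ≤ γ) :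
    |Real.sin s| ≤ Real.sin γ := by
  have hpi := Real.pi_gt_d6
  have hpi2 := Real.pi_lt_d2
  rw [abs_sin_eq (by nlinarith [abs_nonneg s])]
  have hmem1 : |s| ∈ Set.Icc (-(π / 2)) (π / 2) := by
    constructor <;> nlinarith [abs_nonneg s]
  have hmem2 : γ ∈ Set.Icc (-(π / 2)) (π / 2) := by
    constructor <;> nlinarith
  exact Real.strictMonoOn_sin.monotoneOn hmem1 hmem2 hs

end Stmt10

namespace Stmt10

lemma lin_abs {A B cs ss rA rB : ℝ} (hA : |A| ≤ rA) (hB : |B| ≤ rB)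
    (hcs : |cs| ≤ 1) (hss : |ss| ≤ 1) : |A * cs + B * ss| ≤ rA + rB := by
  calc |A * cs + B * ss| ≤ |A * cs| + |B * ss| := abs_add_le _ _
  _ = |A| * |cs| + |B| * |ss| := by rw [abs_mul, abs_mul]
  _ ≤ rA * 1 + rB * 1 := by
      apply add_le_add
      · exact mul_le_mul hA hcs (abs_nonneg _) (le_trans (abs_nonneg _) hA)
      · exact mul_le_mul hB hss (abs_nonneg _) (le_trans (abs_nonneg _) hB)
  _ = rA + rB := by ring

lemma blob_bounds {ε γ : ℝ} (hε0 : 0 < ε) (hγ0 : 0 < γ) (hγ12 : γ ≤ π / 12)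
    {k : ℕ} {z : ℝ × ℝ} (hz : z ∈ Sp ε γ k ∪ Sm ε γ k) :
    |z.1 - ak ε k| ≤ rr ε γ k ∧ |z.2| ≤ 21 / 20 * Real.tan γ * ak ε k + rr ε γ k := by
  have ht0 := tan_gamma_pos hγ0 hγ12
  have hak := ak_pos hε0 k
  have hrr := rr_pos hε0 ht0 k
  have hτ : 0 < 21 / 20 * Real.tan γ * ak ε k := by positivity
  rcases hz with hz | hz
  · simp only [Sp, Set.mem_prod, Set.mem_Ioo] at hz
    obtain ⟨⟨h1, h2⟩, h3, h4⟩ := hz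
    exact ⟨abs_le.2 ⟨by linarith, by linarith⟩, abs_le.2 ⟨by linarith, by linarith⟩⟩
  · simp only [Sm, Set.mem_prod, Set.mem_Ioo] at hz
    obtain ⟨⟨h1, h2⟩, h3, h4⟩ := hz
    exact ⟨abs_le.2 ⟨by linarith, by linarith⟩, abs_le.2 ⟨by linarith, by linarith⟩⟩

/-- key bound : the functional gap between a blob point and the scale center -/
lemma gap_bound {ε γ : ℝ} (s : ℝ) (hε0 : 0 < ε) (hγ0 : 0 < γ) (hγ12 : γ ≤ π / 12)
    {k : ℕ} {z : ℝ × ℝ} (hz : z ∈ Sp ε γ k ∪ Sm ε γ k) :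
    |ak ε k * Real.cos s - (z.1 * Real.cos s + z.2 * Real.sin s)| ≤
      107 / 100 * Real.tan γ * ak ε k ∧
    |ak ε k * (-Real.sin s) - (-(z.1 * Real.sin s) + z.2 * Real.cos s)| ≤
      107 / 100 * Real.tan γ * ak ε k := by
  obtain ⟨h1, h2⟩ := blob_bounds hε0 hγ0 hγ12 hz
  have h1' : |ak ε k - z.1| ≤ rr ε γ k := by rwa [abs_sub_comm] at h1
  have hcs := Real.abs_cos_le_one s
  have hss := Real.abs_sin_le_one s
  have hsum : rr ε γ k + (21 / 20 * Real.tan γ * ak ε k + rr ε γ k)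
      = 107 / 100 * Real.tan γ * ak ε k := by
    rw [rr]; ring
  constructor
  · have e : ak ε k * Real.cos s - (z.1 * Real.cos s + z.2 * Real.sin s)
        = (ak ε k - z.1) * Real.cos s + (-z.2) * Real.sin s := by ring
    rw [e, ← hsum]
    exact lin_abs h1' (show |(-z.2)| ≤ 21 / 20 * Real.tan γ * ak ε k + rr ε γ k by
      rwa [abs_neg]) hcs hss
  · have e : ak ε k * (-Real.sin s) - (-(z.1 * Real.sin s) + z.2 * Real.cos s)
        = (-z.2) * Real.cos s + (z.1 - ak ε k) * Real.sin s := by ring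
    rw [e]
    have := lin_abs (show |(-z.2)| ≤ 21 / 20 * Real.tan γ * ak ε k + rr ε γ k by
      rwa [abs_neg]) h1 hcs hss
    linarith [this]

/-- blob points are within `2ε/5` of the origin in each rotated coordinate -/
lemma blob_small {ε γ : ℝ} (s : ℝ) (hε0 : 0 < ε) (hγ0 : 0 < γ) (hγ12 : γ ≤ π / 12)
    {k : ℕ} {z : ℝ × ℝ} (hz : z ∈ Sp ε γ k ∪ Sm ε γ k) :
    |z.1 * Real.cos s + z.2 * Real.sin s| ≤ 2 / 5 * ε ∧
    |(-(z.1 * Real.sin s) + z.2 * Real.cos s)| ≤ 2 / 5 * ε := by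
  obtain ⟨h1, h2⟩ := blob_bounds hε0 hγ0 hγ12 hz
  have ht0 := tan_gamma_pos hγ0 hγ12
  have ht28 := tan_gamma_le hγ0 hγ12
  have hak := ak_pos hε0 k
  have hak4 := ak_le hε0 k
  have hrr : rr ε γ k = Real.tan γ * ak ε k / 100 := rfl
  have hz1 : |z.1| ≤ ak ε k + rr ε γ k := by
    have := abs_le.1 h1; rw [abs_le]; constructor <;> [nlinarith [rr_pos hε0 ht0 k]; nlinarith]
  have hbound : (ak ε k + rr ε γ k) + (21 / 20 * Real.tan γ * ak ε k + rr ε γ k) ≤ 2 / 5 * ε := by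
    rw [hrr]
    nlinarith
  have hcs := Real.abs_cos_le_one s
  have hss := Real.abs_sin_le_one s
  constructor
  · have := lin_abs hz1 h2 hcs hss
    linarith
  · have e : -(z.1 * Real.sin s) + z.2 * Real.cos s
        = z.2 * Real.cos s + (-z.1) * Real.sin s := by ring
    rw [e]
    have := lin_abs h2 (show |(-z.1)| ≤ ak ε k + rr ε γ k by rwa [abs_neg]) hcs hss
    linarith

end Stmt10

namespace Stmt10

set_option maxHeartbeats 1000000 in
lemma cond3_lemma (ε γ : ℝ) (hε0 : 0 < ε) (hγ0 : 0 < γ) (hγ12 : γ ≤ π / 12)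
    (N : ℕ) (hN8 : 8 / ε ^ 3 ≤ (N : ℝ))
    (s : ℝ) (hs1 : 3 * γ < |s|) (hs2 : |s| < π / 2 - 3 * γ)
    (x : ℝ × ℝ) (hxu : 2 * ε ≤ |x.1 * Real.cos s + x.2 * Real.sin s|)
    (hxv : 2 * ε ≤ |(-(x.1 * Real.sin s) + x.2 * Real.cos s)|)
    (cc : ℝ × ℝ) (a b : ℝ) (ha : 0 < a) (hb : 0 < b) (hxR : x ∈ rect s cc a b) :
    |∫ p in rect s cc a b, ph ε γ N p| ≤ ε / 2 * (a * b) := by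
  classical
  have ht0 := tan_gamma_pos hγ0 hγ12
  have ht28 := tan_gamma_le hγ0 hγ12
  have hN0 : (0 : ℝ) < N := lt_of_lt_of_le (by positivity) hN8
  obtain ⟨hsins, hcoss⟩ := abs_cos_sin_ge hγ0 hγ12 hs1 hs2
  set R := rect s cc a b with hR
  rw [setIntegral_ph]
  set f : ℕ → ℝ := fun k => 1 / (2 * (N : ℝ)) / (4 * rr ε γ k ^ 2) *
    ((volume (R ∩ Sp ε γ k)).toReal - (volume (R ∩ Sm ε γ k)).toReal) with hf
  -- each term is bounded by w and vanishes unless the scale is "bad"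
  have hterm_le : ∀ k, |f k| ≤ 1 / (2 * (N : ℝ)) := by
    intro k
    have hrrk := rr_pos hε0 ht0 k
    have hv1 : (volume (R ∩ Sp ε γ k)).toReal ≤ 4 * rr ε γ k ^ 2 := by
      rw [← vol_Sp_toReal hrrk.le]
      exact ENNReal.toReal_mono (vol_Sp_lt_top k).ne (measure_mono Set.inter_subset_right)
    have hv2 : (volume (R ∩ Sm ε γ k)).toReal ≤ 4 * rr ε γ k ^ 2 := by
      rw [← vol_Sm_toReal hrrk.le]
      exact ENNReal.toReal_mono (vol_Sm_lt_top k).ne (measure_mono Set.inter_subset_right)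
    have hv1' : 0 ≤ (volume (R ∩ Sp ε γ k)).toReal := ENNReal.toReal_nonneg
    have hv2' : 0 ≤ (volume (R ∩ Sm ε γ k)).toReal := ENNReal.toReal_nonneg
    rw [hf, abs_mul]
    have h4 : (0:ℝ) < 4 * rr ε γ k ^ 2 := by positivity
    have : |1 / (2 * (N : ℝ)) / (4 * rr ε γ k ^ 2)| = 1 / (2 * (N : ℝ)) / (4 * rr ε γ k ^ 2) := by
      rw [abs_of_nonneg]; positivity
    rw [this]
    have habs : |(volume (R ∩ Sp ε γ k)).toReal - (volume (R ∩ Sm ε γ k)).toReal|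
        ≤ 4 * rr ε γ k ^ 2 := abs_le.2 ⟨by linarith, by linarith⟩
    calc 1 / (2 * (N : ℝ)) / (4 * rr ε γ k ^ 2) * |_ - _| ≤
        1 / (2 * (N : ℝ)) / (4 * rr ε γ k ^ 2) * (4 * rr ε γ k ^ 2) := by
          apply mul_le_mul_of_nonneg_left habs (by positivity)
    _ = 1 / (2 * (N : ℝ)) := by field_simp
  set Bad : ℕ → Prop := fun k =>
    (∃ p ∈ Sp ε γ k ∪ Sm ε γ k, p ∈ R) ∧ (∃ q ∈ Sp ε γ k ∪ Sm ε γ k, q ∉ R) with hBad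
  have hgood : ∀ k, ¬ Bad k → f k = 0 := by
    intro k hk
    rw [hf]
    by_cases hall : ∃ p ∈ Sp ε γ k ∪ Sm ε γ k, p ∈ R
    · -- then all of the blob pair is inside R
      have hsub : Sp ε γ k ∪ Sm ε γ k ⊆ R := by
        intro z hz
        by_contra hzR
        exact hk ⟨hall, ⟨z, hz, hzR⟩⟩
      have e1 : R ∩ Sp ε γ k = Sp ε γ k :=
        Set.inter_eq_self_of_subset_right (fun z hz => hsub (Set.mem_union_left _ hz))
      have e2 : R ∩ Sm ε γ k = Sm ε γ k :=
        Set.inter_eq_self_of_subset_right (fun z hz => hsub (Set.mem_union_right _ hz))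
      simp only [e1, e2]
      rw [vol_Sp_toReal (rr_pos hε0 ht0 k).le, vol_Sm_toReal (rr_pos hε0 ht0 k).le]
      ring
    · have e1 : R ∩ Sp ε γ k = ∅ := by
        ext z; simp only [Set.mem_inter_iff, Set.mem_empty_iff_false, iff_false, not_and]
        intro hzR hzS
        exact hall ⟨z, Set.mem_union_left _ hzS, hzR⟩
      have e2 : R ∩ Sm ε γ k = ∅ := by
        ext z; simp only [Set.mem_inter_iff, Set.mem_empty_iff_false, iff_false, not_and]
        intro hzR hzS
        exact hall ⟨z, Set.mem_union_right _ hzS, hzR⟩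
      simp only [e1, e2, measure_empty]
      simp
  -- the four edge predicates
  set D1 : ℝ := cc.1 * Real.cos s + cc.2 * Real.sin s with hD1
  set D2 : ℝ := -(cc.1 * Real.sin s) + cc.2 * Real.cos s with hD2
  -- membership in R in functional form
  have hmem : ∀ z : ℝ × ℝ, z ∈ R ↔
      ((0 < z.1 * Real.cos s + z.2 * Real.sin s - D1 ∧
        z.1 * Real.cos s + z.2 * Real.sin s - D1 < a) ∧
       (0 < -(z.1 * Real.sin s) + z.2 * Real.cos s - D2 ∧
        -(z.1 * Real.sin s) + z.2 * Real.cos s - D2 < b)) := by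
    intro z
    have e1 : (z.1 - cc.1) * Real.cos s + (z.2 - cc.2) * Real.sin s
        = z.1 * Real.cos s + z.2 * Real.sin s - D1 := by rw [hD1]; ring
    have e2 : -((z.1 - cc.1) * Real.sin s) + (z.2 - cc.2) * Real.cos s
        = -(z.1 * Real.sin s) + z.2 * Real.cos s - D2 := by rw [hD2]; ring
    rw [hR, mem_rect, e1, e2]
  -- bad scales satisfy one of four edge conditions
  have hbad_edge : ∀ k, Bad k →
      |ak ε k * Real.cos s - D1| ≤ 107 / 100 * Real.tan γ * ak ε k ∨
      |ak ε k * Real.cos s - (D1 + a)| ≤ 107 / 100 * Real.tan γ * ak ε k ∨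
      |ak ε k * (-Real.sin s) - D2| ≤ 107 / 100 * Real.tan γ * ak ε k ∨
      |ak ε k * (-Real.sin s) - (D2 + b)| ≤ 107 / 100 * Real.tan γ * ak ε k := by
    intro k hk
    obtain ⟨⟨p, hpT, hpR⟩, q, hqT, hqR⟩ := hk
    obtain ⟨hgp1, hgp2⟩ := gap_bound s hε0 hγ0 hγ12 hpT
    obtain ⟨hgq1, hgq2⟩ := gap_bound s hε0 hγ0 hγ12 hqT
    rw [hmem] at hpR
    obtain ⟨⟨hp1, hp2⟩, hp3, hp4⟩ := hpR
    have hcases : q.1 * Real.cos s + q.2 * Real.sin s - D1 ≤ 0 ∨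
        a ≤ q.1 * Real.cos s + q.2 * Real.sin s - D1 ∨
        -(q.1 * Real.sin s) + q.2 * Real.cos s - D2 ≤ 0 ∨
        b ≤ -(q.1 * Real.sin s) + q.2 * Real.cos s - D2 := by
      by_contra hco
      push_neg at hco
      obtain ⟨h1, h2, h3, h4⟩ := hco
      exact hqR ((hmem q).2 ⟨⟨h1, h2⟩, h3, h4⟩)
    have hgp1' := abs_le.1 hgp1
    have hgq1' := abs_le.1 hgq1
    have hgp2' := abs_le.1 hgp2
    have hgq2' := abs_le.1 hgq2
    rcases hcases with hq | hq | hq | hq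
    · left
      rw [abs_le]
      constructor <;> linarith
    · right; left
      rw [abs_le]
      constructor <;> linarith
    · right; right; left
      rw [abs_le]
      constructor <;> linarith
    · right; right; right
      rw [abs_le]
      constructor <;> linarith
  -- counting
  set BadF := (Finset.range N).filter Bad with hBadF
  have hcard : BadF.card ≤ 8 := by
    have hsub : BadF ⊆
        (edgeSet ε γ (Real.cos s) D1 N ∪ edgeSet ε γ (Real.cos s) (D1 + a) N) ∪
        (edgeSet ε γ (-Real.sin s) D2 N ∪ edgeSet ε γ (-Real.sin s) (D2 + b) N) := by
      intro k hk
      rw [hBadF, Finset.mem_filter] at hk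
      obtain ⟨hkr, hkb⟩ := hk
      simp only [edgeSet, Finset.mem_union, Finset.mem_filter]
      rcases hbad_edge k hkb with h | h | h | h
      · exact Or.inl (Or.inl ⟨hkr, h⟩)
      · exact Or.inl (Or.inr ⟨hkr, h⟩)
      · exact Or.inr (Or.inl ⟨hkr, h⟩)
      · exact Or.inr (Or.inr ⟨hkr, h⟩)
    have hc1 := card_edgeSet_le (Real.cos s) D1 hε0 ht0 hcoss N
    have hc2 := card_edgeSet_le (Real.cos s) (D1 + a) hε0 ht0 hcoss N
    have habs : 21 / 10 * Real.tan γ ≤ |(-Real.sin s)| := by rwa [abs_neg]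
    have hc3 := card_edgeSet_le (-Real.sin s) D2 hε0 ht0 habs N
    have hc4 := card_edgeSet_le (-Real.sin s) (D2 + b) hε0 ht0 habs N
    calc BadF.card ≤ _ := Finset.card_le_card hsub
    _ ≤ _ := Finset.card_union_le _ _
    _ ≤ 8 := by
        have h12 := Finset.card_union_le (edgeSet ε γ (Real.cos s) D1 N)
          (edgeSet ε γ (Real.cos s) (D1 + a) N)
        have h34 := Finset.card_union_le (edgeSet ε γ (-Real.sin s) D2 N)
          (edgeSet ε γ (-Real.sin s) (D2 + b) N)
        omega
  -- sum over bad scales only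
  have hsum_eq : ∑ k ∈ Finset.range N, f k = ∑ k ∈ BadF, f k := by
    rw [hBadF]
    exact (Finset.sum_filter_of_ne (fun k _ hne => by
      by_contra hc
      exact hne (hgood k hc))).symm
  -- bound on the bad part of the sum
  have hBsum : |∑ k ∈ BadF, f k| ≤ 8 * (1 / (2 * (N : ℝ))) := by
    calc |∑ k ∈ BadF, f k| ≤ ∑ k ∈ BadF, |f k| := Finset.abs_sum_le_sum_abs _ _
    _ ≤ ∑ _k ∈ BadF, 1 / (2 * (N : ℝ)) := Finset.sum_le_sum (fun k _ => hterm_le k)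
    _ = BadF.card * (1 / (2 * (N : ℝ))) := by rw [Finset.sum_const, nsmul_eq_mul]
    _ ≤ 8 * (1 / (2 * (N : ℝ))) := by
        apply mul_le_mul_of_nonneg_right _ (by positivity)
        exact_mod_cast hcard
  rw [hsum_eq]
  by_cases hmeet : ∃ k ∈ Finset.range N, ∃ p ∈ Sp ε γ k ∪ Sm ε γ k, p ∈ R
  · obtain ⟨k0, _hk0, q0, hq0T, hq0R⟩ := hmeet
    obtain ⟨hq0u, hq0v⟩ := blob_small s hε0 hγ0 hγ12 hq0T
    obtain ⟨⟨hx1, hx2⟩, hx3, hx4⟩ := (hmem x).1 hxR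
    obtain ⟨⟨hq1, hq2⟩, hq3, hq4⟩ := (hmem q0).1 hq0R
    have hq0u' := abs_le.1 hq0u
    have hq0v' := abs_le.1 hq0v
    have h8a : 8 / 5 * ε ≤ a := by
      have h1 : |(x.1 * Real.cos s + x.2 * Real.sin s) -
          (q0.1 * Real.cos s + q0.2 * Real.sin s)| < a := by
        rw [abs_lt]; constructor <;> linarith
      have h2 := abs_sub_abs_le_abs_sub (x.1 * Real.cos s + x.2 * Real.sin s)
        (q0.1 * Real.cos s + q0.2 * Real.sin s)
      linarith
    have h8b : 8 / 5 * ε ≤ b := by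
      have h1 : |(-(x.1 * Real.sin s) + x.2 * Real.cos s) -
          (-(q0.1 * Real.sin s) + q0.2 * Real.cos s)| < b := by
        rw [abs_lt]; constructor <;> linarith
      have h2 := abs_sub_abs_le_abs_sub (-(x.1 * Real.sin s) + x.2 * Real.cos s)
        (-(q0.1 * Real.sin s) + q0.2 * Real.cos s)
      linarith
    have hN4 : 8 * (1 / (2 * (N : ℝ))) ≤ ε ^ 3 / 2 := by
      have h8 : 8 ≤ (N : ℝ) * ε ^ 3 := by
        rw [div_le_iff₀ (by positivity)] at hN8
        linarith
      have e : 8 * (1 / (2 * (N : ℝ))) = 4 / (N : ℝ) := by ring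
      rw [e, div_le_div_iff₀ hN0 (by norm_num : (0:ℝ) < 2)]
      nlinarith
    have hab : (8 / 5 * ε) * (8 / 5 * ε) ≤ a * b :=
      mul_le_mul h8a h8b (by positivity) (by linarith)
    calc |∑ k ∈ BadF, f k| ≤ 8 * (1 / (2 * (N : ℝ))) := hBsum
    _ ≤ ε ^ 3 / 2 := hN4
    _ ≤ ε / 2 * (a * b) := by nlinarith
  · have hz : ∑ k ∈ BadF, f k = 0 := by
      apply Finset.sum_eq_zero
      intro k hk
      exfalso
      rw [hBadF, Finset.mem_filter] at hk
      obtain ⟨hkr, hkb⟩ := hk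
      exact hmeet ⟨k, hkr, hkb.1⟩
    rw [hz, abs_zero]
    positivity

end Stmt10

namespace Stmt10

lemma Sp_subset_K {ε γ x₁ x₂ s : ℝ} (hε0 : 0 < ε) (hγ0 : 0 < γ) (hγ12 : γ ≤ π / 12)
    (hx₁ : ε ≤ x₁) (hx₂ : ε ≤ x₂) (hs : |s| ≤ γ) (k : ℕ) :
    Sp ε γ k ⊆ rot s '' (Set.Icc 0 x₁ ×ˢ Set.Icc 0 x₂) := by
  have ht0 := tan_gamma_pos hγ0 hγ12
  have ht28 := tan_gamma_le hγ0 hγ12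
  have hcg := cos_gamma_ge hγ0 hγ12
  have hcs := cos_s_ge hγ0 hγ12 hs
  have hss := abs_le.1 (abs_sin_s_le hγ0 hγ12 hs)
  have hsg : Real.sin γ = Real.tan γ * Real.cos γ := sin_tan_eq hγ0 hγ12
  have hcos_le := Real.cos_le_one s
  have hsin_le := abs_le.1 (Real.abs_sin_le_one s)
  have hak := ak_pos hε0 k
  have hak4 := ak_le hε0 k
  have htak : Real.tan γ * ak ε k ≤ 7 / 25 * ak ε k :=
    mul_le_mul_of_nonneg_right ht28 hak.le
  have htakpos : 0 < Real.tan γ * ak ε k := mul_pos ht0 hak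
  have ht2ak : Real.tan γ * (Real.tan γ * ak ε k) ≤ 7 / 25 * (Real.tan γ * ak ε k) :=
    mul_le_mul_of_nonneg_right ht28 htakpos.le
  intro p hp
  simp only [Sp, Set.mem_prod, Set.mem_Ioo] at hp
  obtain ⟨⟨h1, h2⟩, h3, h4⟩ := hp
  rw [show rr ε γ k = Real.tan γ * ak ε k / 100 from rfl] at h1 h2 h3 h4
  have hp1pos : 0 < p.1 := by linarith
  have hp2pos : 0 < p.2 := by linarith
  have htp2 : Real.tan γ * p.2 ≤ Real.tan γ * (21 / 20 * Real.tan γ * ak ε k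
      + Real.tan γ * ak ε k / 100) := mul_le_mul_of_nonneg_left h4.le ht0.le
  have htp1 : Real.tan γ * p.1 ≤ Real.tan γ * (ak ε k + Real.tan γ * ak ε k / 100) :=
    mul_le_mul_of_nonneg_left h2.le ht0.le
  have htp2' : Real.tan γ * (21 / 20 * Real.tan γ * ak ε k + Real.tan γ * ak ε k / 100)
      = 21 / 20 * (Real.tan γ * (Real.tan γ * ak ε k))
        + Real.tan γ * (Real.tan γ * ak ε k) / 100 := by ring
  have htp1' : Real.tan γ * (ak ε k + Real.tan γ * ak ε k / 100)
      = Real.tan γ * ak ε k + Real.tan γ * (Real.tan γ * ak ε k) / 100 := by ring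
  rw [htp2'] at htp2
  rw [htp1'] at htp1
  have h6 : 0 ≤ p.1 - Real.tan γ * p.2 := by linarith
  have h7 : 0 ≤ p.2 - Real.tan γ * p.1 := by linarith
  have hcγpos : (0:ℝ) < Real.cos γ := by linarith
  rw [mem_rot_image, rot_neg_apply]
  simp only [Set.mem_prod, Set.mem_Icc]
  have e1 : p.1 * Real.cos γ ≤ p.1 * Real.cos s := mul_le_mul_of_nonneg_left hcs hp1pos.le
  have e2 : p.2 * (-Real.sin γ) ≤ p.2 * Real.sin s := mul_le_mul_of_nonneg_left hss.1 hp2pos.le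
  have e3 : p.1 * Real.sin s ≤ p.1 * Real.sin γ := mul_le_mul_of_nonneg_left hss.2 hp1pos.le
  have e4 : p.2 * Real.cos γ ≤ p.2 * Real.cos s := mul_le_mul_of_nonneg_left hcs hp2pos.le
  have f1 : p.1 * Real.cos s ≤ p.1 * 1 := mul_le_mul_of_nonneg_left hcos_le hp1pos.le
  have f2 : p.2 * Real.sin s ≤ p.2 * 1 := mul_le_mul_of_nonneg_left hsin_le.2 hp2pos.le
  have f3 : p.1 * (-1) ≤ p.1 * Real.sin s := mul_le_mul_of_nonneg_left hsin_le.1 hp1pos.le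
  have f4 : p.2 * Real.cos s ≤ p.2 * 1 := mul_le_mul_of_nonneg_left hcos_le hp2pos.le
  have hsum : p.1 + p.2 ≤ ε := by linarith
  refine ⟨⟨?_, ?_⟩, ?_, ?_⟩
  · have e5 : 0 ≤ p.1 * Real.cos γ - p.2 * Real.sin γ := by
      rw [hsg]
      linarith [mul_nonneg h6 hcγpos.le]
    linarith
  · linarith
  · have e5 : 0 ≤ p.2 * Real.cos γ - p.1 * Real.sin γ := by
      rw [hsg]
      linarith [mul_nonneg h7 hcγpos.le]
    linarith
  · linarith

lemma Sm_disj_K {ε γ x₁ x₂ s : ℝ} (hε0 : 0 < ε) (hγ0 : 0 < γ) (hγ12 : γ ≤ π / 12)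
    (hs : |s| ≤ γ) (k : ℕ) :
    rot s '' (Set.Icc 0 x₁ ×ˢ Set.Icc 0 x₂) ∩ Sm ε γ k = ∅ := by
  have ht0 := tan_gamma_pos hγ0 hγ12
  have ht28 := tan_gamma_le hγ0 hγ12
  have hcg := cos_gamma_ge hγ0 hγ12
  have hcs := cos_s_ge hγ0 hγ12 hs
  have hss := abs_le.1 (abs_sin_s_le hγ0 hγ12 hs)
  have hsg : Real.sin γ = Real.tan γ * Real.cos γ := sin_tan_eq hγ0 hγ12
  have hak := ak_pos hε0 k
  have htak : Real.tan γ * ak ε k ≤ 7 / 25 * ak ε k :=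
    mul_le_mul_of_nonneg_right ht28 hak.le
  have htakpos : 0 < Real.tan γ * ak ε k := mul_pos ht0 hak
  have hcγpos : (0:ℝ) < Real.cos γ := by linarith
  ext z
  simp only [Set.mem_inter_iff, Set.mem_empty_iff_false, iff_false, not_and]
  intro hzK hzS
  simp only [Sm, Set.mem_prod, Set.mem_Ioo] at hzS
  obtain ⟨⟨h1, h2⟩, h3, h4⟩ := hzS
  rw [show rr ε γ k = Real.tan γ * ak ε k / 100 from rfl] at h1 h2 h3 h4
  have hz1pos : 0 < z.1 := by linarith
  have hz2neg : z.2 < 0 := by linarith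
  rw [mem_rot_image, rot_neg_apply] at hzK
  simp only [Set.mem_prod, Set.mem_Icc] at hzK
  have hv := hzK.2.1
  have e3 : z.1 * (-Real.sin γ) ≤ z.1 * Real.sin s := mul_le_mul_of_nonneg_left hss.1 hz1pos.le
  have e4 : z.2 * Real.cos s ≤ z.2 * Real.cos γ := by
    linarith [mul_nonpos_of_nonpos_of_nonneg hz2neg.le (sub_nonneg.2 hcs)]
  have htp1 : Real.tan γ * z.1 ≤ Real.tan γ * (ak ε k + Real.tan γ * ak ε k / 100) :=
    mul_le_mul_of_nonneg_left h2.le ht0.le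
  have htp1' : Real.tan γ * (ak ε k + Real.tan γ * ak ε k / 100)
      = Real.tan γ * ak ε k + Real.tan γ * (Real.tan γ * ak ε k) / 100 := by ring
  rw [htp1'] at htp1
  have ht2ak : Real.tan γ * (Real.tan γ * ak ε k) ≤ 7 / 25 * (Real.tan γ * ak ε k) :=
    mul_le_mul_of_nonneg_right ht28 htakpos.le
  have h6 : Real.tan γ * z.1 + z.2 < 0 := by linarith
  have e5 : z.1 * Real.sin γ + z.2 * Real.cos γ < 0 := by
    rw [hsg]
    linarith [mul_neg_of_neg_of_pos h6 hcγpos]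
  linarith

set_option maxHeartbeats 1000000 in
lemma cond2_lemma (ε γ : ℝ) (hε0 : 0 < ε) (hγ0 : 0 < γ) (hγ12 : γ ≤ π / 12)
    (N : ℕ) (hN : 1 ≤ N) (x₁ x₂ : ℝ) (hx₁ : ε ≤ x₁) (hx₂ : ε ≤ x₂)
    (s : ℝ) (hs : |s| ≤ γ) :
    (1 : ℝ) / 4 ≤ ∫ p in rot s '' (Set.Icc 0 x₁ ×ˢ Set.Icc 0 x₂), ph ε γ N p := by
  have ht0 := tan_gamma_pos hγ0 hγ12
  rw [setIntegral_ph]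
  have hterm : ∀ k ∈ Finset.range N,
      1 / (2 * (N : ℝ)) / (4 * rr ε γ k ^ 2) *
        ((volume ((rot s '' (Set.Icc 0 x₁ ×ˢ Set.Icc 0 x₂)) ∩ Sp ε γ k)).toReal -
         (volume ((rot s '' (Set.Icc 0 x₁ ×ˢ Set.Icc 0 x₂)) ∩ Sm ε γ k)).toReal)
      = 1 / (2 * (N : ℝ)) := by
    intro k _
    have hrrk := rr_pos hε0 ht0 k
    rw [Set.inter_eq_self_of_subset_right (Sp_subset_K hε0 hγ0 hγ12 hx₁ hx₂ hs k),
      Sm_disj_K hε0 hγ0 hγ12 hs k, measure_empty, vol_Sp_toReal hrrk.le]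
    simp only [ENNReal.toReal_zero]
    field_simp
    ring
  rw [Finset.sum_congr rfl hterm, Finset.sum_const, Finset.card_range, nsmul_eq_mul]
  have hN0 : (0 : ℝ) < N := by exact_mod_cast hN
  rw [show (N : ℝ) * (1 / (2 * (N : ℝ))) = 1 / 2 by field_simp]
  norm_num

end Stmt10

namespace Stmt10

lemma ph_measurable (ε γ : ℝ) (N : ℕ) : Measurable (ph ε γ N) := by
  unfold ph
  apply Finset.measurable_sum
  intro k _
  exact ((measurable_const.indicator (measurableSet_Sp k)).sub
    (measurable_const.indicator (measurableSet_Sm k))).const_mul _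

lemma indicator_mem (S : Set (ℝ × ℝ)) (x : ℝ × ℝ) :
    S.indicator (fun _ => (1 : ℝ)) x = 0 ∨ S.indicator (fun _ => (1 : ℝ)) x = 1 := by
  classical
  rw [Set.indicator_apply]
  split <;> simp

lemma ph_bounded (ε γ : ℝ) (N : ℕ) (x : ℝ × ℝ) :
    |ph ε γ N x| ≤ ∑ k ∈ Finset.range N, |1 / (2 * (N : ℝ)) / (4 * rr ε γ k ^ 2)| := by
  unfold ph
  refine le_trans (Finset.abs_sum_le_sum_abs _ _) (Finset.sum_le_sum ?_)
  intro k _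
  rw [abs_mul]
  have h1 := indicator_mem (Sp ε γ k) x
  have h2 := indicator_mem (Sm ε γ k) x
  have : |(Sp ε γ k).indicator (fun _ => (1:ℝ)) x -
      (Sm ε γ k).indicator (fun _ => (1:ℝ)) x| ≤ 1 := by
    rcases h1 with h | h <;> rcases h2 with h' | h' <;> rw [h, h'] <;> norm_num
  nlinarith [abs_nonneg (1 / (2 * (N : ℝ)) / (4 * rr ε γ k ^ 2))]

lemma ph_support {ε γ : ℝ} (hε0 : 0 < ε) (hγ0 : 0 < γ) (hγ12 : γ ≤ π / 12) (N : ℕ) :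
    Function.support (ph ε γ N) ⊆ euclBall ε := by
  intro x hx
  have hx' : ph ε γ N x ≠ 0 := hx
  obtain ⟨k, _, hne⟩ := Finset.exists_ne_zero_of_sum_ne_zero hx'
  have hmem : x ∈ Sp ε γ k ∪ Sm ε γ k := by
    by_contra h
    rw [Set.mem_union] at h
    push_neg at h
    rw [Set.indicator_of_notMem h.1, Set.indicator_of_notMem h.2] at hne
    simp at hne
  obtain ⟨b1, b2⟩ := blob_bounds hε0 hγ0 hγ12 hmem
  have hb1 := abs_le.1 b1
  have hb2 := abs_le.1 b2
  have ht0 := tan_gamma_pos hγ0 hγ12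
  have ht28 := tan_gamma_le hγ0 hγ12
  have hak := ak_pos hε0 k
  have hak4 := ak_le hε0 k
  have hrrk := rr_pos hε0 ht0 k
  have hrr_eq : rr ε γ k = Real.tan γ * ak ε k / 100 := rfl
  have htak : Real.tan γ * ak ε k ≤ 7 / 25 * ak ε k :=
    mul_le_mul_of_nonneg_right ht28 hak.le
  have htakpos : 0 < Real.tan γ * ak ε k := mul_pos ht0 hak
  have ht2ak : Real.tan γ * (Real.tan γ * ak ε k) ≤ 7 / 25 * (Real.tan γ * ak ε k) :=
    mul_le_mul_of_nonneg_right ht28 htakpos.le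
  have fA : ak ε k * ak ε k ≤ (ε / 4) * (ε / 4) :=
    mul_le_mul hak4 hak4 hak.le (by positivity)
  have fB : (Real.tan γ * ak ε k) * ak ε k ≤ (7 / 25 * ak ε k) * ak ε k :=
    mul_le_mul_of_nonneg_right htak hak.le
  have fC : (Real.tan γ * (Real.tan γ * ak ε k)) * ak ε k
      ≤ (7 / 25 * (Real.tan γ * ak ε k)) * ak ε k :=
    mul_le_mul_of_nonneg_right ht2ak hak.le
  have hx1pos : 0 < x.1 := by
    rw [hrr_eq] at hb1
    linarith
  have h1 : x.1 ^ 2 ≤ (ak ε k + rr ε γ k) ^ 2 := by nlinarith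
  have h2 : x.2 ^ 2 ≤ (21 / 20 * Real.tan γ * ak ε k + rr ε γ k) ^ 2 := by nlinarith
  have h3 : x.1 ^ 2 + x.2 ^ 2 ≤ ε ^ 2 := by
    rw [hrr_eq] at h1 h2
    nlinarith [fA, fB, fC, mul_le_mul_of_nonneg_right fC hak.le]
  show Real.sqrt (x.1 ^ 2 + x.2 ^ 2) ≤ ε
  calc Real.sqrt (x.1 ^ 2 + x.2 ^ 2) ≤ Real.sqrt (ε ^ 2) := Real.sqrt_le_sqrt h3
  _ = ε := Real.sqrt_sq hε0.le

lemma ph_integral_zero {ε γ : ℝ} (hε0 : 0 < ε) (hγ0 : 0 < γ) (hγ12 : γ ≤ π / 12) (N : ℕ) :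
    (∫ x : ℝ × ℝ, ph ε γ N x) = 0 := by
  have ht0 := tan_gamma_pos hγ0 hγ12
  rw [← MeasureTheory.setIntegral_univ, setIntegral_ph]
  apply Finset.sum_eq_zero
  intro k _
  rw [Set.univ_inter, Set.univ_inter, vol_Sp_toReal (rr_pos hε0 ht0 k).le,
    vol_Sm_toReal (rr_pos hε0 ht0 k).le]
  ring

lemma ph_abs_integral {ε γ : ℝ} (hε0 : 0 < ε) (hγ0 : 0 < γ) (hγ12 : γ ≤ π / 12)
    (N : ℕ) (hN : 1 ≤ N) :
    (∫ x : ℝ × ℝ, |ph ε γ N x|) ≤ 1 := by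
  have ht0 := tan_gamma_pos hγ0 hγ12
  have hN0 : (0 : ℝ) < N := by exact_mod_cast hN
  set ψ : ℝ × ℝ → ℝ := fun x => ∑ k ∈ Finset.range N,
    (1 / (2 * (N : ℝ)) / (4 * rr ε γ k ^ 2)) *
      ((Sp ε γ k).indicator (fun _ => (1 : ℝ)) x + (Sm ε γ k).indicator (fun _ => (1 : ℝ)) x)
    with hψ
  have hint_term : ∀ k, Integrable (fun x => (1 / (2 * (N : ℝ)) / (4 * rr ε γ k ^ 2)) *
      ((Sp ε γ k).indicator (fun _ => (1 : ℝ)) x + (Sm ε γ k).indicator (fun _ => (1 : ℝ)) x))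
      volume := by
    intro k
    exact ((integrable_ind (measurableSet_Sp k) (vol_Sp_lt_top k)).add
      (integrable_ind (measurableSet_Sm k) (vol_Sm_lt_top k))).const_mul _
  have hψint : Integrable ψ volume := by
    rw [hψ]
    apply MeasureTheory.integrable_finset_sum
    intro k _
    exact hint_term k
  have hphint : Integrable (ph ε γ N) volume := by
    have := integrable_ph (ε := ε) (γ := γ) N Set.univ
    rwa [Measure.restrict_univ] at this
  have hle : ∀ x, |ph ε γ N x| ≤ ψ x := by
    intro x
    rw [hψ]
    unfold ph
    refine le_trans (Finset.abs_sum_le_sum_abs _ _) (Finset.sum_le_sum ?_)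
    intro k _
    rw [abs_mul]
    have hc : (0:ℝ) ≤ 1 / (2 * (N : ℝ)) / (4 * rr ε γ k ^ 2) := by positivity
    rw [abs_of_nonneg hc]
    apply mul_le_mul_of_nonneg_left _ hc
    have h1 := indicator_mem (Sp ε γ k) x
    have h2 := indicator_mem (Sm ε γ k) x
    rcases h1 with h | h <;> rcases h2 with h' | h' <;> rw [h, h'] <;> norm_num
  calc (∫ x : ℝ × ℝ, |ph ε γ N x|) ≤ ∫ x : ℝ × ℝ, ψ x :=
        integral_mono hphint.abs hψint hle
  _ = ∑ k ∈ Finset.range N, (1 : ℝ) / (N : ℝ) := by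
      rw [hψ, integral_finset_sum _ (fun k _ => hint_term k)]
      apply Finset.sum_congr rfl
      intro k _
      rw [integral_const_mul, integral_add
        (integrable_ind (measurableSet_Sp k) (vol_Sp_lt_top k))
        (integrable_ind (measurableSet_Sm k) (vol_Sm_lt_top k)),
        integral_indicator (measurableSet_Sp k), integral_indicator (measurableSet_Sm k),
        setIntegral_const, setIntegral_const, measureReal_def, measureReal_def, vol_Sp_toReal (rr_pos hε0 ht0 k).le,
        vol_Sm_toReal (rr_pos hε0 ht0 k).le]
      have hrrk := rr_pos hε0 ht0 k
      field_simp
      ring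
  _ = 1 := by
      rw [Finset.sum_const, Finset.card_range, nsmul_eq_mul]
      field_simp

end Stmt10


/-- for `0 < ε < 1`, `0 < γ ≤ π/12` there is a bounded measurable `φ`
supported in `B(ε)`, with `∫ φ = 0`, `∫ |φ| ≤ 1`, averages over rotated corner
rectangles at least `1/4` for `|s| ≤ γ`, and small maximal function away from the
two strips for `3γ < |s| < π/2 - 3γ`. -/
theorem exists_phi (ε γ : ℝ) (hε : 0 < ε ∧ ε < 1) (hγ : 0 < γ ∧ γ ≤ π / 12) :
    ∃ φ : ℝ × ℝ → ℝ, Measurable φ ∧ (∃ C : ℝ, ∀ x, |φ x| ≤ C) ∧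
      Function.support φ ⊆ euclBall ε ∧
      (∫ x : ℝ × ℝ, φ x) = 0 ∧ (∫ x : ℝ × ℝ, |φ x|) ≤ 1 ∧
      (∀ x₁ x₂ : ℝ, ε ≤ x₁ → ε ≤ x₂ → ∀ s : ℝ, |s| ≤ γ →
        (1 : ℝ) / 4 ≤ ∫ p in rot s '' (Set.Icc 0 x₁ ×ˢ Set.Icc 0 x₂), φ p) ∧
      (∀ s : ℝ, 3 * γ < |s| → |s| < π / 2 - 3 * γ →
        ∀ x ∉ strip s (2 * ε) ∪ strip (s + π / 2) (2 * ε),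
          maxFn s (fun _ => True) φ x < ENNReal.ofReal ε) := by
  obtain ⟨hε0, hε1⟩ := hε
  obtain ⟨hγ0, hγ12⟩ := hγ
  set N : ℕ := max 1 ⌈(8 : ℝ) / ε ^ 3⌉₊ with hN_def
  have hN1 : 1 ≤ N := le_max_left _ _
  have hN8 : (8 : ℝ) / ε ^ 3 ≤ N := by
    calc (8 : ℝ) / ε ^ 3 ≤ (⌈(8 : ℝ) / ε ^ 3⌉₊ : ℝ) := Nat.le_ceil _
    _ ≤ N := by exact_mod_cast le_max_right _ _
  refine ⟨Stmt10.ph ε γ N, Stmt10.ph_measurable ε γ N,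
    ⟨_, Stmt10.ph_bounded ε γ N⟩,
    Stmt10.ph_support hε0 hγ0 hγ12 N,
    Stmt10.ph_integral_zero hε0 hγ0 hγ12 N,
    Stmt10.ph_abs_integral hε0 hγ0 hγ12 N hN1, ?_, ?_⟩
  · intro x₁ x₂ hx₁ hx₂ s hs
    exact Stmt10.cond2_lemma ε γ hε0 hγ0 hγ12 N hN1 x₁ x₂ hx₁ hx₂ s hs
  · intro s hs1 hs2 x hx
    have hx1 : x ∉ strip s (2 * ε) := fun h => hx (Set.mem_union_left _ h)
    have hx2 : x ∉ strip (s + π / 2) (2 * ε) := fun h => hx (Set.mem_union_right _ h)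
    have hv : 2 * ε ≤ |(-(x.1 * Real.sin s) + x.2 * Real.cos s)| := by
      by_contra h
      push_neg at h
      exact hx1 (Stmt10.mem_strip.2 h)
    have hu : 2 * ε ≤ |x.1 * Real.cos s + x.2 * Real.sin s| := by
      by_contra h
      push_neg at h
      apply hx2
      rw [Stmt10.mem_strip, Real.sin_add_pi_div_two, Real.cos_add_pi_div_two,
        show -(x.1 * Real.cos s) + x.2 * -Real.sin s
          = -(x.1 * Real.cos s + x.2 * Real.sin s) by ring, abs_neg]
      exact h
    have hle : maxFn s (fun _ => True) (Stmt10.ph ε γ N) x ≤ ENNReal.ofReal (ε / 2) := by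
      unfold maxFn
      apply iSup_le
      intro R
      apply iSup_le
      rintro ⟨⟨c, a, b, ha, hb, -, -, rfl⟩, hxR⟩
      apply ENNReal.ofReal_le_ofReal
      have hvol : (volume (rect s c a b)).toReal = a * b := by
        rw [Stmt10.volume_rect, ENNReal.toReal_mul, ENNReal.toReal_ofReal ha.le,
          ENNReal.toReal_ofReal hb.le]
      rw [hvol, div_le_iff₀ (by positivity)]
      have := Stmt10.cond3_lemma ε γ hε0 hγ0 hγ12 N hN8 s hs1 hs2 x hu hv c a b ha hb hxR
      linarith
    apply lt_of_le_of_lt hle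
    rw [ENNReal.ofReal_lt_ofReal_iff hε0]
    linarith

end
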